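/- arXiv:1711.04796 — 4 statements merged into one kernel-verified Lean document; each statement's English description precedes it below -/
import Mathlib

section
/- Let S ⊂ R_{++} be a finite set and let g : (S ∪ {0,∞})^n → [0,1] be right-continuous, n-increasing, satisfy g(z)=0 whenever some coordinate of z is 0, and g(∞,...,∞)=1. Then there exists a function G : (R_{++} ∪ {0,∞})^n → [0,1] with the same four properties on the whole extended positive orthant such that g is the restriction of G to (S ∪ {0,∞})^n. Conversely, the restriction of any such G to (S ∪ {0,∞})^n has the four properties on that finite grid. -/
open MeasureTheory ENNReal
open scoped Classical

/-- Signed vertex sum of `g` over the `n`-box `[x,y]`: vertex `b` picks `y i`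
where `s i = true` and `x i` where `s i = false`; the sign is `+1` iff `b i = x i`
for an even number of coordinates. -/
noncomputable def boxSum (n : ℕ) (g : (Fin n → ℝ≥0∞) → ℝ) (x y : Fin n → ℝ≥0∞) : ℝ :=
  ∑ s : Fin n → Bool, (-1 : ℝ) ^ (Finset.univ.filter (fun i => s i = false)).card *
    g (fun i => if s i then y i else x i)

/-- `g` has the four CDF-like properties on the grid `D^n`:
values in `[0,1]`, right continuity (continuity within the upper set intersected
with the domain), `n`-increasingness, vanishing when a coordinate is `0`, and
value `1` at `(∞,…,∞)`. -/
def IsGridCDF (n : ℕ) (D : Set ℝ≥0∞) (g : (Fin n → ℝ≥0∞) → ℝ) : Prop :=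
  (∀ z : Fin n → ℝ≥0∞, (∀ i, z i ∈ D) → g z ∈ Set.Icc (0 : ℝ) 1) ∧
  (∀ z : Fin n → ℝ≥0∞, (∀ i, z i ∈ D) →
    ContinuousWithinAt g {w : Fin n → ℝ≥0∞ | (∀ i, w i ∈ D) ∧ ∀ i, z i ≤ w i} z) ∧
  (∀ x y : Fin n → ℝ≥0∞, (∀ i, x i ∈ D) → (∀ i, y i ∈ D) → (∀ i, x i ≤ y i) →
    0 ≤ boxSum n g x y) ∧
  (∀ z : Fin n → ℝ≥0∞, (∀ i, z i ∈ D) → (∃ i, z i = 0) → g z = 0) ∧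
  g (fun _ => ∞) = 1

noncomputable def fExt (S : Set ℝ≥0∞) (a t : ℝ≥0∞) : ℝ≥0∞ :=
  if t < a then sSup (insert 0 {x ∈ S | x ≤ t}) else ∞

lemma fExt_mono (S : Set ℝ≥0∞) (a : ℝ≥0∞) : Monotone (fExt S a) := by
  intro t u htu
  unfold fExt
  split_ifs with h1 h2 h2
  · refine sSup_le_sSup ?_
    intro x hx
    rcases hx with h | h
    · exact Or.inl h
    · exact Or.inr ⟨h.1, h.2.trans htu⟩
  · exact le_top
  · exact absurd (lt_of_le_of_lt htu h2) h1
  · exact le_rfl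

lemma fExt_mem (S : Set ℝ≥0∞) (hfin : S.Finite) (a t : ℝ≥0∞) :
    fExt S a t ∈ S ∪ {0, ∞} := by
  unfold fExt
  split_ifs with h
  · have hne : (insert 0 {x ∈ S | x ≤ t}).Nonempty := ⟨0, Set.mem_insert _ _⟩
    have hf : (insert 0 {x ∈ S | x ≤ t}).Finite :=
      ((hfin.subset (Set.sep_subset _ _)).insert 0)
    have := hne.csSup_mem hf
    rcases this with h0 | hx
    · right; simp [h0]
    · left; exact hx.1
  · right; simp

lemma fExt_self (S : Set ℝ≥0∞) (hS : ∀ s ∈ S, 0 < s ∧ s < ∞) (a : ℝ≥0∞)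
    (ha : ∀ s ∈ S, s < a) (ha0 : 0 < a) {t : ℝ≥0∞} (ht : t ∈ S ∪ {0, ∞}) :
    fExt S a t = t := by
  unfold fExt
  rcases ht with ht | ht
  · rw [if_pos (ha t ht)]
    apply le_antisymm
    · refine sSup_le ?_
      rintro x (rfl | ⟨_, hx⟩)
      · exact zero_le
      · exact hx
    · exact le_sSup (Or.inr ⟨ht, le_rfl⟩)
  · rcases ht with rfl | ht
    · rw [if_pos ha0]
      apply le_antisymm
      · refine sSup_le ?_
        rintro x (rfl | ⟨hxS, hx⟩)
        · exact le_rfl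
        · exact absurd (lt_of_lt_of_le (hS x hxS).1 hx) (lt_irrefl 0)
      · exact zero_le
    · simp only [Set.mem_singleton_iff] at ht
      subst ht
      rw [if_neg not_top_lt]

lemma fExt_eventually (S : Set ℝ≥0∞) (hfin : S.Finite) (a t : ℝ≥0∞) :
    ∃ U ∈ nhds t, ∀ w ∈ U, t ≤ w → fExt S a w = fExt S a t := by
  rcases lt_or_ge t a with hta | hat
  · set T : Set ℝ≥0∞ := {s ∈ insert a S | t < s} with hT
    have hTfin : T.Finite := (hfin.insert a).subset (Set.sep_subset _ _)
    have hTne : T.Nonempty := ⟨a, Set.mem_insert _ _, hta⟩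
    have hb : sInf T ∈ T := hTne.csInf_mem hTfin
    have htb : t < sInf T := hb.2
    refine ⟨Set.Iio (sInf T), Iio_mem_nhds htb, ?_⟩
    intro w hw htw
    have hba : sInf T ≤ a := sInf_le ⟨Set.mem_insert _ _, hta⟩
    have hwa : w < a := lt_of_lt_of_le hw hba
    unfold fExt
    rw [if_pos hwa, if_pos hta]
    congr 1
    ext x
    simp only [Set.mem_insert_iff, Set.mem_setOf_eq]
    constructor
    · rintro (rfl | ⟨hxS, hxw⟩)
      · exact Or.inl rfl
      · refine Or.inr ⟨hxS, ?_⟩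
        by_contra hxt
        have : t < x := lt_of_not_ge hxt
        have : sInf T ≤ x := sInf_le ⟨Or.inr hxS, this⟩
        exact absurd (lt_of_le_of_lt (this.trans hxw) hw) (lt_irrefl _)
    · rintro (rfl | ⟨hxS, hxt⟩)
      · exact Or.inl rfl
      · exact Or.inr ⟨hxS, hxt.trans htw⟩
  · refine ⟨Set.univ, Filter.univ_mem, ?_⟩
    intro w _ htw
    unfold fExt
    rw [if_neg (not_lt.2 hat), if_neg (not_lt.2 (hat.trans htw))]

/-- for a finite `S ⊂ ℝ_{++}`, a function `g` on the grid
`(S ∪ {0,∞})^n` has the four CDF properties iff it is the restriction of a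
function `G` having the four properties on the whole extended positive orthant. -/
theorem stmt3 {n : ℕ} (S : Set ℝ≥0∞) (hfin : S.Finite)
    (hS : ∀ s ∈ S, 0 < s ∧ s < ∞) (g : (Fin n → ℝ≥0∞) → ℝ) :
    IsGridCDF n (S ∪ {0, ∞}) g ↔
      ∃ G : (Fin n → ℝ≥0∞) → ℝ, IsGridCDF n Set.univ G ∧
        ∀ z : Fin n → ℝ≥0∞, (∀ i, z i ∈ S ∪ {0, ∞}) → g z = G z := by
  constructor
  · rintro ⟨h1, h2, h3, h4, h5⟩
    have hMlt : sSup S < ∞ := by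
      rcases S.eq_empty_or_nonempty with rfl | hne
      · simp
      · exact (hS _ (hne.csSup_mem hfin)).2
    set a : ℝ≥0∞ := sSup S + 1 with ha_def
    have ha : ∀ s ∈ S, s < a :=
      fun s hs => (le_sSup hs).trans_lt (ENNReal.lt_add_right hMlt.ne one_ne_zero)
    have ha0 : 0 < a := lt_of_lt_of_le zero_lt_one le_add_self
    set f : ℝ≥0∞ → ℝ≥0∞ := fExt S a with hf_def
    have hmemf : ∀ t, f t ∈ S ∪ {0, ∞} := fExt_mem S hfin a
    have hselff : ∀ {t}, t ∈ S ∪ {0, ∞} → f t = t := fun ht => fExt_self S hS a ha ha0 ht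
    set G : (Fin n → ℝ≥0∞) → ℝ := fun z => g (fun i => f (z i)) with hG_def
    have hrestr : ∀ z : Fin n → ℝ≥0∞, (∀ i, z i ∈ S ∪ {0, ∞}) → g z = G z := by
      intro z hz
      simp only [hG_def]
      congr 1
      funext i
      exact (hselff (hz i)).symm
    refine ⟨G, ⟨?_, ?_, ?_, ?_, ?_⟩, hrestr⟩
    · intro z _
      exact h1 _ (fun i => hmemf _)
    · intro z _
      have hU : ∀ i : Fin n, ∃ U ∈ nhds (z i), ∀ w ∈ U, z i ≤ w → f w = f (z i) :=
        fun i => fExt_eventually S hfin a (z i)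
      choose U hUm hUe using hU
      have hev : ∀ᶠ w : Fin n → ℝ≥0∞ in nhds z, ∀ i, w i ∈ U i := by
        rw [Filter.eventually_all]
        intro i
        exact ((continuous_apply i).tendsto z) (hUm i)
      refine ContinuousWithinAt.congr_of_eventuallyEq
        (continuousWithinAt_const :
          ContinuousWithinAt (fun _ : Fin n → ℝ≥0∞ => G z) _ _) ?_ rfl
      filter_upwards [hev.filter_mono nhdsWithin_le_nhds, self_mem_nhdsWithin] with w hw hwT
      show G w = G z
      simp only [hG_def]
      congr 1
      funext i
      exact hUe i (w i) (hw i) (hwT.2 i)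
    · intro x y _ _ hxy
      have hbs : boxSum n G x y = boxSum n g (fun i => f (x i)) (fun i => f (y i)) := by
        unfold boxSum
        refine Finset.sum_congr rfl fun s _ => ?_
        congr 1
        simp only [hG_def]
        congr 1
        funext i
        exact apply_ite f (s i = true) (y i) (x i)
      rw [hbs]
      exact h3 _ _ (fun i => hmemf _) (fun i => hmemf _) (fun i => fExt_mono S a (hxy i))
    · rintro z _ ⟨i, hi⟩
      refine h4 _ (fun j => hmemf _) ⟨i, ?_⟩
      rw [hi]
      exact hselff (Or.inr (by simp))
    · show G (fun _ => ∞) = 1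
      simp only [hG_def]
      have : (fun i : Fin n => f ∞) = fun _ : Fin n => (∞ : ℝ≥0∞) :=
        funext fun i => hselff (Or.inr (by simp))
      rw [this, h5]
  · rintro ⟨G, ⟨g1, g2, g3, g4, g5⟩, hres⟩
    refine ⟨?_, ?_, ?_, ?_, ?_⟩
    · intro z hz
      rw [hres z hz]
      exact g1 z (fun _ => trivial)
    · intro z hz
      have hsub : {w : Fin n → ℝ≥0∞ | (∀ i, w i ∈ S ∪ {0, ∞}) ∧ ∀ i, z i ≤ w i} ⊆
          {w : Fin n → ℝ≥0∞ | (∀ i, w i ∈ (Set.univ : Set ℝ≥0∞)) ∧ ∀ i, z i ≤ w i} :=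
        fun w hw => ⟨fun _ => trivial, hw.2⟩
      exact ((g2 z (fun _ => trivial)).mono hsub).congr
        (fun w hw => hres w hw.1) (hres z hz)
    · intro x y hx hy hxy
      have hbs : boxSum n g x y = boxSum n G x y := by
        unfold boxSum
        refine Finset.sum_congr rfl fun s _ => ?_
        congr 1
        refine hres _ fun i => ?_
        split_ifs
        · exact hy i
        · exact hx i
      rw [hbs]
      exact g3 x y (fun _ => trivial) (fun _ => trivial) hxy
    · intro z hz hz0
      rw [hres z hz]
      exact g4 z (fun _ => trivial) hz0
    · rw [hres (fun _ => ∞) (fun i => Or.inr (by simp))]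
      exact g5
end

section
/- Let S_k = {r_1, ..., r_{k−1}, 1, 1/r_{k−1}, ..., 1/r_1} with 0 < r_1 < ... < r_{k−1} < 1, and let F : R_{++} → [0,1] be a CDF that is piecewise defined on the intervals determined by S_k, satisfying F(x) + F(1/x) = 1 for all x not in S_k, and right-continuous. Define φ^F(x,y) = 1 + y − min{1, 1−1/x+y}F(x) − yF(y) + min{1+1/x, 1+y}·max{0, F(x)+F(y)−1}. Then sup_{x,y > 0} φ^F(x,y) = sup_{x,y > 0, xy ≥ 1} [ y − 1/x + (1 + 1/x − y)F(y) + (1/x)F(x) ]. -/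
open Set ENNReal Filter Topology

lemma exists_right_aux (S : Finset ℝ) (F : ℝ → ℝ) (x : ℝ)
    (hrc : ContinuousWithinAt F (Set.Ici x) x) (ε : ℝ) (hε : 0 < ε)
    (U : Set ℝ) (hU : U ∈ 𝓝[>] x) :
    ∃ z, x < z ∧ z ∉ S ∧ F z < F x + ε ∧ z ∈ U := by
  have ht : Filter.Tendsto F (𝓝[>] x) (𝓝 (F x)) :=
    hrc.tendsto.mono_left (nhdsWithin_mono x Ioi_subset_Ici_self)
  have h1 : ∀ᶠ z in 𝓝[>] x, F z < F x + ε :=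
    ht.eventually_lt_const (by linarith)
  have h2 : ∀ᶠ z in 𝓝[>] x, z ∉ S := by
    have hcl : ((↑S \ {x} : Set ℝ))ᶜ ∈ 𝓝 x := by
      refine ((S.finite_toSet.diff).isClosed.isOpen_compl).mem_nhds ?_
      simp
    have h3 : (↑S \ {x} : Set ℝ)ᶜ ∈ 𝓝[>] x := nhdsWithin_le_nhds hcl
    filter_upwards [h3, self_mem_nhdsWithin] with z hz hz'
    intro hzS
    exact hz ⟨hzS, ne_of_gt hz'⟩
  obtain ⟨z, ⟨⟨hz1, hz2⟩, hz3⟩, hz4⟩ :=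
    (((h1.and h2).and hU).and self_mem_nhdsWithin).exists
  exact ⟨z, hz4, hz2, hz1, hz3⟩

lemma key_ge (S : Finset ℝ) (F : ℝ → ℝ)
    (hmono : MonotoneOn F (Set.Ioi 0))
    (hrc : ∀ x > (0 : ℝ), ContinuousWithinAt F (Set.Ici x) x)
    (hsym : ∀ x > (0 : ℝ), x ∉ S → F x + F x⁻¹ = 1)
    {x : ℝ} (hx : 0 < x) : 1 ≤ F x + F x⁻¹ := by
  refine le_of_forall_pos_le_add fun ε hε => ?_
  obtain ⟨z, hz1, hz2, hz3, -⟩ :=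
    exists_right_aux S F x (hrc x hx) ε hε Set.univ univ_mem
  have hzpos : 0 < z := hx.trans hz1
  have hFz : F z⁻¹ ≤ F x⁻¹ :=
    hmono (by simp [hzpos] : z⁻¹ ∈ Set.Ioi 0) (by simp [hx])
      (inv_anti₀ hx hz1.le)
  have := hsym z hzpos hz2
  linarith

lemma eq_on_ge (F : ℝ → ℝ) {x y : ℝ} (hx : 0 < x) (hy : 0 < y)
    (hxy : 1 ≤ x * y) (hmono : MonotoneOn F (Set.Ioi 0))
    (hkey : 1 ≤ F x + F x⁻¹) :
    1 + y - min 1 (1 - 1 / x + y) * F x - y * F y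
      + min (1 + 1 / x) (1 + y) * max 0 (F x + F y - 1)
    = y - 1 / x + (1 + 1 / x - y) * F y + (1 / x) * F x := by
  have hinvle : x⁻¹ ≤ y := by
    rw [inv_le_comm₀ hx hy, inv_le_iff_one_le_mul₀ hy]
    linarith [mul_comm x y]
  have h1x : 1 / x ≤ y := by rwa [one_div]
  have hFy : F x⁻¹ ≤ F y := hmono (by simp [hx]) (by simp [hy]) hinvle
  have hmin1 : min 1 (1 - 1 / x + y) = 1 := min_eq_left (by linarith)
  have hmin2 : min (1 + 1 / x) (1 + y) = 1 + 1 / x := min_eq_left (by linarith)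
  have hmax : max 0 (F x + F y - 1) = F x + F y - 1 := max_eq_right (by linarith)
  rw [hmin1, hmin2, hmax]
  ring

lemma eq_on_lt (S : Finset ℝ) (F : ℝ → ℝ) {x y : ℝ} (hx : 0 < x) (hy : 0 < y)
    (hxy : x * y ≤ 1) (hxS : x ∉ S) (hyS : y ∉ S)
    (hmono : MonotoneOn F (Set.Ioi 0))
    (hsym : ∀ x > (0 : ℝ), x ∉ S → F x + F x⁻¹ = 1) :
    1 + y - min 1 (1 - 1 / x + y) * F x - y * F y
      + min (1 + 1 / x) (1 + y) * max 0 (F x + F y - 1)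
    = x⁻¹ - 1 / y⁻¹ + (1 + 1 / y⁻¹ - x⁻¹) * F x⁻¹ + (1 / y⁻¹) * F y⁻¹ := by
  have hxinv : x * x⁻¹ = 1 := mul_inv_cancel₀ hx.ne'
  have hyle : y ≤ x⁻¹ := by nlinarith [inv_pos.mpr hx]
  have h1x : y ≤ 1 / x := by rwa [one_div]
  have hFy : F y ≤ F x⁻¹ := hmono (by simp [hy]) (by simp [hx]) hyle
  have hsx := hsym x hx hxS
  have hsy := hsym y hy hyS
  have hmin1 : min 1 (1 - 1 / x + y) = 1 - 1 / x + y := min_eq_right (by linarith)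
  have hmin2 : min (1 + 1 / x) (1 + y) = 1 + y := min_eq_right (by linarith)
  have hmax : max 0 (F x + F y - 1) = 0 := max_eq_left (by linarith)
  have hyy : 1 / y⁻¹ = y := by rw [one_div, inv_inv]
  rw [hmin1, hmin2, hmax, hyy, one_div]
  have hFx' : F x⁻¹ = 1 - F x := by linarith
  have hFy' : F y⁻¹ = 1 - F y := by linarith
  rw [hFx', hFy']
  ring

lemma main_ineq (u u' y y' a a' b b' δ εr w : ℝ)
    (hδ : 0 < δ) (hyy' : y < y')
    (hA : (a' - a) * (1 - u' + y') ≤ δ * (2 + y))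
    (hB1 : y' * (b' - b) ≤ (y + 1) * δ)
    (hC1 : a * (u - u') ≤ δ * w)
    (hC2 : a * (y' - y) ≤ δ)
    (hC3 : (y' - y) * b ≤ δ)
    (hδC : (6 + 2 * y + w) * δ ≤ εr) :
    (1 + y - (1 - u + y) * a - y * b)
      ≤ (1 + y' - (1 - u' + y') * a' - y' * b') + εr := by
  nlinarith [hA, hB1, hC1, hC2, hC3, hδ.le, hyy'.le, hδC]

set_option maxHeartbeats 1000000 in
lemma hard_case (S : Finset ℝ) (F : ℝ → ℝ)
    (hrange : ∀ x > (0 : ℝ), F x ∈ Set.Icc (0 : ℝ) 1)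
    (hmono : MonotoneOn F (Set.Ioi 0))
    (hrc : ∀ x > (0 : ℝ), ContinuousWithinAt F (Set.Ici x) x)
    (hsym : ∀ x > (0 : ℝ), x ∉ S → F x + F x⁻¹ = 1)
    (x y : ℝ) (hx : 0 < x) (hy : 0 < y) (hxy : x * y < 1)
    (B : ℝ≥0∞)
    (hB : ∀ x' y' : ℝ, 0 < x' → 0 < y' → x' ∉ S → y' ∉ S → x' * y' ≤ 1 →
      ENNReal.ofReal (1 + y' - min 1 (1 - 1 / x' + y') * F x' - y' * F y'
        + min (1 + 1 / x') (1 + y') * max 0 (F x' + F y' - 1)) ≤ B) :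
    ENNReal.ofReal (1 + y - min 1 (1 - 1 / x + y) * F x - y * F y
        + min (1 + 1 / x) (1 + y) * max 0 (F x + F y - 1)) ≤ B := by
  refine ENNReal.le_of_forall_pos_le_add fun ε hε _ => ?_
  set εr : ℝ := (ε : ℝ) with hεr
  have hεr0 : 0 < εr := by exact_mod_cast hε
  set C : ℝ := 6 + 2 * y + 1 / (x * x) with hCdef
  have hC : 0 < C := by positivity
  set δ : ℝ := min 1 (εr / C) with hδdef
  have hδ : 0 < δ := lt_min one_pos (by positivity)
  have hδ1 : δ ≤ 1 := min_le_left _ _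
  have hδC : C * δ ≤ εr := by
    have : δ ≤ εr / C := min_le_right _ _
    calc C * δ ≤ C * (εr / C) := mul_le_mul_of_nonneg_left this hC.le
      _ = εr := mul_div_cancel₀ εr hC.ne'
  have hU1 : Set.Ioo x (x + δ) ∩ {z | z * y < 1} ∈ 𝓝[>] x := by
    refine Filter.inter_mem (Ioo_mem_nhdsGT_of_mem ⟨le_refl x, by linarith⟩) ?_
    refine nhdsWithin_le_nhds (IsOpen.mem_nhds ?_ ?_)
    · exact isOpen_lt (continuous_id.mul continuous_const) continuous_const
    · exact hxy
  obtain ⟨x', hxx', hx'S, hFx', hx'U⟩ :=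
    exists_right_aux S F x (hrc x hx) δ hδ _ hU1
  obtain ⟨⟨-, hx'ub⟩, hx'y⟩ := hx'U
  have hx'pos : 0 < x' := hx.trans hxx'
  have hU2 : Set.Ioo y (y + δ) ∩ {z | x' * z < 1} ∈ 𝓝[>] y := by
    refine Filter.inter_mem (Ioo_mem_nhdsGT_of_mem ⟨le_refl y, by linarith⟩) ?_
    refine nhdsWithin_le_nhds (IsOpen.mem_nhds ?_ ?_)
    · exact isOpen_lt (continuous_const.mul continuous_id) continuous_const
    · exact hx'y
  obtain ⟨y', hyy', hy'S, hFy', hy'U⟩ :=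
    exists_right_aux S F y (hrc y hy) δ hδ _ hU2
  obtain ⟨⟨-, hy'ub⟩, hx'y'⟩ := hy'U
  have hy'pos : 0 < y' := hy.trans hyy'
  have hx'y'le : x' * y' ≤ 1 := le_of_lt hx'y'
  have hFxm : F x ≤ F x' := hmono (by simp [hx]) (by simp [hx'pos]) hxx'.le
  have hFym : F y ≤ F y' := hmono (by simp [hy]) (by simp [hy'pos]) hyy'.le
  have hFx0 : 0 ≤ F x := (hrange x hx).1
  have hFy0 : 0 ≤ F y := (hrange y hy).1
  have hFx1 : F x' ≤ 1 := (hrange x' hx'pos).2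
  have hFy1 : F y' ≤ 1 := (hrange y' hy'pos).2
  have hx'inv : x' * x'⁻¹ = 1 := mul_inv_cancel₀ hx'pos.ne'
  have hy'le : y' ≤ x'⁻¹ := by nlinarith [inv_pos.mpr hx'pos]
  have hFy'le : F y' ≤ F x'⁻¹ := hmono (by simp [hy'pos]) (by simp [hx'pos]) hy'le
  have hsum' : F x' + F y' ≤ 1 := by
    have := hsym x' hx'pos hx'S; linarith
  have hylt : y < 1 / x := by
    rw [lt_div_iff₀ hx]; linarith [mul_comm x y]
  have hy'lt : y' ≤ 1 / x' := by rwa [one_div]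
  have hmin1 : min 1 (1 - 1 / x + y) = 1 - 1 / x + y := min_eq_right (by linarith)
  have hmin2 : min (1 + 1 / x) (1 + y) = 1 + y := min_eq_right (by linarith)
  have hmax : max 0 (F x + F y - 1) = 0 := max_eq_left (by linarith)
  have hmin1' : min 1 (1 - 1 / x' + y') = 1 - 1 / x' + y' := min_eq_right (by linarith)
  have hmin2' : min (1 + 1 / x') (1 + y') = 1 + y' := min_eq_right (by linarith)
  have hmax' : max 0 (F x' + F y' - 1) = 0 := max_eq_left (by linarith)
  have hinv0 : 0 ≤ 1 / x - 1 / x' := by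
    have := one_div_le_one_div_of_le hx hxx'.le; linarith
  have hinvd : 1 / x - 1 / x' ≤ δ / (x * x) := by
    have heq : 1 / x - 1 / x' = (x' - x) / (x * x') :=
      by field_simp
    rw [heq]
    exact div_le_div₀ (le_of_lt hδ) (by linarith) (mul_pos hx hx)
      (by nlinarith)
  have hA : (F x' - F x) * (1 - 1 / x' + y') ≤ δ * (2 + y) := by
    have ht' : 1 - 1 / x' + y' ≤ 2 + y := by
      have : 0 < 1 / x' := by positivity
      linarith
    calc (F x' - F x) * (1 - 1 / x' + y')
        ≤ (F x' - F x) * (2 + y) := mul_le_mul_of_nonneg_left ht' (by linarith)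
      _ ≤ δ * (2 + y) := mul_le_mul_of_nonneg_right (by linarith) (by linarith)
  have hB1 : y' * (F y' - F y) ≤ (y + 1) * δ := by
    calc y' * (F y' - F y) ≤ y' * δ := mul_le_mul_of_nonneg_left (by linarith) hy'pos.le
      _ ≤ (y + 1) * δ := mul_le_mul_of_nonneg_right (by linarith) hδ.le
  have hC1 : F x * (1 / x - 1 / x') ≤ δ / (x * x) := by
    have hFx1' : F x ≤ 1 := (hrange x hx).2
    calc F x * (1 / x - 1 / x') ≤ 1 * (1 / x - 1 / x') :=
          mul_le_mul_of_nonneg_right hFx1' hinv0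
      _ = 1 / x - 1 / x' := one_mul _
      _ ≤ δ / (x * x) := hinvd
  have hC2 : F x * (y' - y) ≤ δ := by
    have hFx1' : F x ≤ 1 := (hrange x hx).2
    calc F x * (y' - y) ≤ 1 * (y' - y) :=
          mul_le_mul_of_nonneg_right hFx1' (by linarith)
      _ ≤ δ := by linarith
  have hC3 : (y' - y) * F y ≤ δ := by
    have hFy1' : F y ≤ 1 := (hrange y hy).2
    calc (y' - y) * F y ≤ (y' - y) * 1 :=
          mul_le_mul_of_nonneg_left hFy1' (by linarith)
      _ ≤ δ := by linarith
  have hC1' : F x * (1 / x - 1 / x') ≤ δ * (1 / (x * x)) := by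
    calc F x * (1 / x - 1 / x') ≤ δ / (x * x) := hC1
      _ = δ * (1 / (x * x)) := by ring
  have hδC' : (6 + 2 * y + 1 / (x * x)) * δ ≤ εr := by
    rw [hCdef] at hδC; linarith
  have main : (1 + y - (1 - 1 / x + y) * F x - y * F y)
      ≤ (1 + y' - (1 - 1 / x' + y') * F x' - y' * F y') + εr :=
    main_ineq (1/x) (1/x') y y' (F x) (F x') (F y) (F y') δ εr (1/(x*x))
      hδ hyy' hA hB1 hC1' hC2 hC3 hδC'
  rw [hmin1, hmin2, hmax]
  calc ENNReal.ofReal (1 + y - (1 - 1 / x + y) * F x - y * F y + (1 + y) * 0)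
      ≤ ENNReal.ofReal ((1 + y' - (1 - 1 / x' + y') * F x' - y' * F y') + εr) := by
        apply ENNReal.ofReal_le_ofReal; linarith
    _ ≤ ENNReal.ofReal (1 + y' - (1 - 1 / x' + y') * F x' - y' * F y') + ENNReal.ofReal εr :=
        ENNReal.ofReal_add_le
    _ ≤ B + ε := by
        refine add_le_add ?_ (by rw [hεr, ENNReal.ofReal_coe_nnreal])
        have := hB x' y' hx'pos hy'pos hx'S hy'S hx'y'le
        rw [hmin1', hmin2', hmax'] at this
        convert this using 2
        · rfl
        ring

/-- for a finite symmetric breakpoint set `S` (closed under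
reciprocals, all positive) and a piecewise CDF `F` with `F(x) + F(1/x) = 1` off
`S`, the supremum of `φ^F` over the positive quadrant equals the supremum over
the region `xy ≥ 1` of the simplified expression
`y − 1/x + (1 + 1/x − y)F(y) + (1/x)F(x)`. -/
theorem stmt12 (S : Finset ℝ) (hpos : ∀ s ∈ S, (0 : ℝ) < s)
    (hinv : ∀ s ∈ S, s⁻¹ ∈ S) (F : ℝ → ℝ)
    (hrange : ∀ x > (0 : ℝ), F x ∈ Set.Icc (0 : ℝ) 1)
    (hmono : MonotoneOn F (Set.Ioi 0))
    (hrc : ∀ x > (0 : ℝ), ContinuousWithinAt F (Set.Ici x) x)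
    (hsym : ∀ x > (0 : ℝ), x ∉ S → F x + F x⁻¹ = 1) :
    (⨆ x ∈ Set.Ioi (0 : ℝ), ⨆ y ∈ Set.Ioi (0 : ℝ), ENNReal.ofReal
        (1 + y - min 1 (1 - 1 / x + y) * F x - y * F y
          + min (1 + 1 / x) (1 + y) * max 0 (F x + F y - 1)))
      = ⨆ x ∈ Set.Ioi (0 : ℝ), ⨆ y ∈ {y : ℝ | 0 < y ∧ 1 ≤ x * y}, ENNReal.ofReal
          (y - 1 / x + (1 + 1 / x - y) * F y + (1 / x) * F x) := by
  apply le_antisymm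
  · refine iSup₂_le fun x hx => iSup₂_le fun y hy => ?_
    simp only [Set.mem_Ioi] at hx hy
    rcases le_or_gt 1 (x * y) with hxy | hxy
    · rw [eq_on_ge F hx hy hxy hmono (key_ge S F hmono hrc hsym hx)]
      exact le_iSup₂_of_le x (Set.mem_Ioi.mpr hx) (le_iSup₂_of_le y ⟨hy, hxy⟩ le_rfl)
    · refine hard_case S F hrange hmono hrc hsym x y hx hy hxy _ ?_
      intro x' y' hx' hy' hx'S hy'S hx'y'
      rw [eq_on_lt S F hx' hy' hx'y' hx'S hy'S hmono hsym]
      have hone : (1 : ℝ) ≤ y'⁻¹ * x'⁻¹ := by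
        have h1 : x' * x'⁻¹ = 1 := mul_inv_cancel₀ hx'.ne'
        have h2 : y' * y'⁻¹ = 1 := mul_inv_cancel₀ hy'.ne'
        nlinarith [inv_pos.mpr hx', inv_pos.mpr hy']
      exact le_iSup₂_of_le y'⁻¹ (Set.mem_Ioi.mpr (inv_pos.mpr hy'))
        (le_iSup₂_of_le x'⁻¹ ⟨inv_pos.mpr hx', hone⟩ le_rfl)
  · refine iSup₂_le fun x hx => iSup₂_le fun y hy => ?_
    simp only [Set.mem_Ioi] at hx
    obtain ⟨hy, hxy⟩ := hy
    rw [← eq_on_ge F hx hy hxy hmono (key_ge S F hmono hrc hsym hx)]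
    exact le_iSup₂_of_le x (Set.mem_Ioi.mpr hx) (le_iSup₂_of_le y (Set.mem_Ioi.mpr hy) le_rfl)
end

section
/- R_2 = inf over univariate CDFs F on R_{++} of sup_{x,y>0} [ 1 + y − min{1, 1−1/x+y}F(x) − yF(y) + min{1+1/x, 1+y}·max{0, F(x)+F(y)−1} ], where R_2 = inf over exchangeable bivariate distributions P of sup_{x,y>0} φ^P(x,y) with φ^P as defined via the marginal CDF F_P and joint CDF H_P of P. -/
open MeasureTheory ENNReal Filter

namespace Stmt15Aux

open Set

noncomputable def Q (F : ℝ → ℝ) (u : ℝ) : ℝ := sInf {x | 0 < x ∧ u ≤ F x}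

variable {F : ℝ → ℝ}

lemma bddS (u : ℝ) : BddBelow {x | 0 < x ∧ u ≤ F x} := ⟨0, fun x hx => hx.1.le⟩

lemma neS (hF1 : Tendsto F atTop (nhds 1)) {u : ℝ} (hu : u < 1) :
    {x | 0 < x ∧ u ≤ F x}.Nonempty := by
  have h1 : ∀ᶠ x in atTop, F x ∈ Ioi u := hF1 (Ioi_mem_nhds hu)
  obtain ⟨x, hx1, hx2⟩ := (h1.and (eventually_gt_atTop 0)).exists
  exact ⟨x, hx2, le_of_lt hx1⟩

lemma Qpos (hF0 : Tendsto F (nhdsWithin 0 (Set.Ioi 0)) (nhds 0))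
    (hF1 : Tendsto F atTop (nhds 1)) {u : ℝ} (hu : 0 < u) (hu1 : u < 1) : 0 < Q F u := by
  have h1 : F ⁻¹' Iio u ∈ nhdsWithin 0 (Set.Ioi 0) := hF0 (Iio_mem_nhds hu)
  rw [mem_nhdsGT_iff_exists_Ioo_subset] at h1
  obtain ⟨ε, hε, hsub⟩ := h1
  refine lt_of_lt_of_le hε (le_csInf (neS hF1 hu1) ?_)
  intro x hx
  by_contra hlt
  push_neg at hlt
  exact absurd hx.2 (not_le.mpr (hsub ⟨hx.1, hlt⟩))

lemma Qle (hmono : MonotoneOn F (Set.Ioi 0))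
    (hrc : ∀ x > (0:ℝ), ContinuousWithinAt F (Set.Ici x) x)
    (hF1 : Tendsto F atTop (nhds 1)) {u x : ℝ} (hu1 : u < 1) (hx : 0 < x) :
    Q F u ≤ x ↔ u ≤ F x := by
  constructor
  · intro h
    have key : ∀ s, x < s → u ≤ F s := by
      intro s hs
      obtain ⟨t, ht, hts⟩ := exists_lt_of_csInf_lt (neS hF1 hu1) (lt_of_le_of_lt h hs)
      exact ht.2.trans (hmono ht.1 (hx.trans hs) hts.le)
    have htd : Tendsto F (nhdsWithin x (Set.Ioi x)) (nhds (F x)) :=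
      (hrc x hx).mono_left (nhdsWithin_mono _ Ioi_subset_Ici_self)
    exact ge_of_tendsto htd (eventually_nhdsWithin_of_forall fun s hs => key s hs)
  · intro h
    exact csInf_le (bddS u) ⟨hx, h⟩

lemma construct (hmono : MonotoneOn F (Set.Ioi 0))
    (hrc : ∀ x > (0:ℝ), ContinuousWithinAt F (Set.Ici x) x)
    (hF0 : Tendsto F (nhdsWithin 0 (Set.Ioi 0)) (nhds 0))
    (hF1 : Tendsto F atTop (nhds 1))
    (hb : ∀ x > (0:ℝ), F x ∈ Set.Icc (0:ℝ) 1) :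
    ∃ P : Measure (ℝ × ℝ), IsProbabilityMeasure P ∧
      P {p : ℝ × ℝ | ¬ (0 < p.1 ∧ 0 < p.2)} = 0 ∧
      P.map Prod.swap = P ∧
      (∀ x > (0:ℝ), P {p : ℝ × ℝ | p.1 ≤ x} = ENNReal.ofReal (F x)) ∧
      (∀ x > (0:ℝ), ∀ y > (0:ℝ),
        P {p : ℝ × ℝ | p.1 ≤ x ∧ p.2 ≤ y} = ENNReal.ofReal (F x + F y - 1)) := by
  set μ : Measure ℝ := volume.restrict (Set.Ioo 0 1) with hμdef
  set f : ℝ → ℝ × ℝ := fun u => (Q F u, Q F (1 - u)) with hfdef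
  have hQm : MonotoneOn (Q F) (Set.Ioo 0 1) := by
    intro a ha b hb' hab
    exact csInf_le_csInf (bddS a) (neS hF1 hb'.2) fun t ht => ⟨ht.1, hab.trans ht.2⟩
  have hanti : AntitoneOn (fun u => Q F (1 - u)) (Set.Ioo 0 1) := by
    intro a ha b hb' hab
    refine csInf_le_csInf (bddS _) (neS hF1 (by linarith [ha.1])) fun t ht =>
      ⟨ht.1, le_trans (by linarith) ht.2⟩
  have hfm : AEMeasurable f μ :=
    (aemeasurable_restrict_of_monotoneOn measurableSet_Ioo hQm).prodMk
      (aemeasurable_restrict_of_antitoneOn measurableSet_Ioo hanti)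
  haveI hμprob : IsProbabilityMeasure μ := by
    constructor
    rw [hμdef, Measure.restrict_apply_univ, Real.volume_Ioo]
    norm_num
  refine ⟨μ.map f, Measure.isProbabilityMeasure_map hfm, ?_, ?_, ?_, ?_⟩
  · -- null outside positive quadrant
    have hms : MeasurableSet {p : ℝ × ℝ | ¬ (0 < p.1 ∧ 0 < p.2)} :=
      ((measurableSet_lt measurable_const measurable_fst).inter
        (measurableSet_lt measurable_const measurable_snd)).compl
    rw [Measure.map_apply_of_aemeasurable hfm hms, hμdef,
      Measure.restrict_apply' measurableSet_Ioo]
    have : f ⁻¹' {p : ℝ × ℝ | ¬ (0 < p.1 ∧ 0 < p.2)} ∩ Set.Ioo 0 1 = ∅ := by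
      rw [Set.eq_empty_iff_forall_notMem]
      rintro u ⟨hu1, hu2⟩
      exact hu1 ⟨Qpos hF0 hF1 hu2.1 hu2.2,
        Qpos hF0 hF1 (by linarith [hu2.2]) (by linarith [hu2.1])⟩
    rw [this, measure_empty]
  · -- exchangeability
    set σ : ℝ → ℝ := fun u => 1 - u with hσdef
    have hσm : Measurable σ := measurable_const.sub measurable_id
    have hpre : σ ⁻¹' Set.Ioo 0 1 = Set.Ioo 0 1 := by
      ext u
      simp only [Set.mem_preimage, Set.mem_Ioo, hσdef]
      constructor <;> rintro ⟨h1, h2⟩ <;> constructor <;> linarith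
    have hvol : volume.map σ = volume := by
      have h : MeasurePreserving (fun t : ℝ => 1 + -t) volume volume :=
        (measurePreserving_add_left volume 1).comp (Measure.measurePreserving_neg volume)
      simpa [hσdef, sub_eq_add_neg] using h.map_eq
    have hσ : μ.map σ = μ := by
      calc μ.map σ = (volume.restrict (σ ⁻¹' Set.Ioo 0 1)).map σ := by rw [hpre]
        _ = (volume.map σ).restrict (Set.Ioo 0 1) :=
            (Measure.restrict_map hσm measurableSet_Ioo).symm
        _ = μ := by rw [hvol]
    have hcomp : Prod.swap ∘ f = f ∘ σ := by
      funext u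
      show (Q F (1 - u), Q F u) = (Q F (1 - u), Q F (1 - (1 - u)))
      rw [_root_.sub_sub_cancel]
    calc (μ.map f).map Prod.swap = μ.map (Prod.swap ∘ f) :=
          AEMeasurable.map_map_of_aemeasurable measurable_swap.aemeasurable hfm
      _ = μ.map (f ∘ σ) := by rw [hcomp]
      _ = (μ.map σ).map f := by
          rw [← AEMeasurable.map_map_of_aemeasurable (by rw [hσ]; exact hfm) hσm.aemeasurable]
      _ = μ.map f := by rw [hσ]
  · -- marginal
    intro x hx
    have hms : MeasurableSet {p : ℝ × ℝ | p.1 ≤ x} :=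
      measurableSet_le measurable_fst measurable_const
    rw [Measure.map_apply_of_aemeasurable hfm hms, hμdef,
      Measure.restrict_apply' measurableSet_Ioo]
    obtain ⟨hFx0, hFx1⟩ := hb x hx
    apply le_antisymm
    · refine (measure_mono (t := Set.Ioc 0 (F x)) ?_).trans_eq (by simp [Real.volume_Ioc])
      rintro u ⟨hu1, hu2⟩
      exact ⟨hu2.1, (Qle hmono hrc hF1 hu2.2 hx).1 hu1⟩
    · refine le_trans (le_of_eq ?_) (measure_mono (s := Set.Ioo 0 (F x)) ?_)
      · simp [Real.volume_Ioo]
      · rintro u ⟨hu0, huF⟩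
        have hu1 : u < 1 := lt_of_lt_of_le huF hFx1
        exact ⟨(Qle hmono hrc hF1 hu1 hx).2 huF.le, hu0, hu1⟩
  · -- joint
    intro x hx y hy
    have hms : MeasurableSet {p : ℝ × ℝ | p.1 ≤ x ∧ p.2 ≤ y} :=
      (measurableSet_le measurable_fst measurable_const).inter
        (measurableSet_le measurable_snd measurable_const)
    rw [Measure.map_apply_of_aemeasurable hfm hms, hμdef,
      Measure.restrict_apply' measurableSet_Ioo]
    obtain ⟨hFx0, hFx1⟩ := hb x hx
    obtain ⟨hFy0, hFy1⟩ := hb y hy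
    apply le_antisymm
    · refine (measure_mono (t := Set.Icc (1 - F y) (F x)) ?_).trans_eq ?_
      · rintro u ⟨⟨hu1, hu2⟩, hu3⟩
        have h1 : u ≤ F x := (Qle hmono hrc hF1 hu3.2 hx).1 hu1
        have h2 : 1 - u ≤ F y :=
          (Qle hmono hrc hF1 (by linarith [hu3.1]) hy).1 hu2
        exact ⟨by linarith, h1⟩
      · rw [Real.volume_Icc]
        congr 1
        ring
    · refine le_trans (le_of_eq ?_) (measure_mono (s := Set.Ioo (1 - F y) (F x)) ?_)
      · rw [Real.volume_Ioo]
        congr 1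
        ring
      · rintro u ⟨hu0, hu1⟩
        have hupos : 0 < u := lt_of_le_of_lt (by linarith) hu0
        have hult : u < 1 := lt_of_lt_of_le hu1 hFx1
        refine ⟨⟨(Qle hmono hrc hF1 hult hx).2 hu1.le,
          (Qle hmono hrc hF1 (by linarith) hy).2 (by linarith)⟩, hupos, hult⟩

end Stmt15Aux

/-- `R₂`, the infimum over exchangeable bivariate distributions
`P` on `ℝ_{++}²` of `sup_{x,y>0} φ^P(x,y)`, equals the infimum over univariate
CDFs `F` on `ℝ_{++}` of `sup_{x,y>0}` of the same expression with the joint CDF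
replaced by `max{0, F(x)+F(y)−1}`. -/
theorem stmt15 :
    (⨅ P ∈ {P : Measure (ℝ × ℝ) | IsProbabilityMeasure P ∧
        P {p : ℝ × ℝ | ¬ (0 < p.1 ∧ 0 < p.2)} = 0 ∧ P.map Prod.swap = P},
      ⨆ x ∈ Set.Ioi (0 : ℝ), ⨆ y ∈ Set.Ioi (0 : ℝ), ENNReal.ofReal
        (1 + y - min 1 (1 - 1 / x + y) * (P {p : ℝ × ℝ | p.1 ≤ x}).toReal
          - y * (P {p : ℝ × ℝ | p.1 ≤ y}).toReal
          + min (1 + 1 / x) (1 + y) * (P {p : ℝ × ℝ | p.1 ≤ x ∧ p.2 ≤ y}).toReal))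
    = ⨅ F ∈ {F : ℝ → ℝ | MonotoneOn F (Set.Ioi 0) ∧
        (∀ x > (0 : ℝ), ContinuousWithinAt F (Set.Ici x) x) ∧
        Tendsto F (nhdsWithin 0 (Set.Ioi 0)) (nhds 0) ∧
        Tendsto F atTop (nhds 1) ∧ ∀ x > (0 : ℝ), F x ∈ Set.Icc (0 : ℝ) 1},
      ⨆ x ∈ Set.Ioi (0 : ℝ), ⨆ y ∈ Set.Ioi (0 : ℝ), ENNReal.ofReal
        (1 + y - min 1 (1 - 1 / x + y) * F x - y * F y
          + min (1 + 1 / x) (1 + y) * max 0 (F x + F y - 1)) := by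
  refine le_antisymm ?_ ?_
  · -- LHS ≤ RHS : construct the lower-Fréchet coupling for each admissible F
    refine le_iInf₂ fun F hF => ?_
    obtain ⟨hmono, hrc, hF0, hF1, hb⟩ := hF
    obtain ⟨P, hPprob, hPnull, hPswap, hmarg, hjoint⟩ :=
      Stmt15Aux.construct hmono hrc hF0 hF1 hb
    refine iInf₂_le_of_le P ⟨hPprob, hPnull, hPswap⟩ (le_of_eq ?_)
    refine iSup_congr fun x => iSup_congr fun hx => iSup_congr fun y => iSup_congr fun hy => ?_
    have hx' : (0:ℝ) < x := hx
    have hy' : (0:ℝ) < y := hy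
    rw [hmarg x hx', hmarg y hy', hjoint x hx' y hy',
      ENNReal.toReal_ofReal (hb x hx').1, ENNReal.toReal_ofReal (hb y hy').1,
      ENNReal.toReal_ofReal', max_comm]
  · -- RHS ≤ LHS : use the marginal CDF and the Fréchet–Hoeffding lower bound
    refine le_iInf₂ fun P hP => ?_
    obtain ⟨hprob, hnull, hswap⟩ := hP
    haveI := hprob
    set ν : Measure ℝ := P.map Prod.fst with hνdef
    haveI : IsProbabilityMeasure ν := Measure.isProbabilityMeasure_map measurable_fst.aemeasurable
    have hv : ∀ t : ℝ, P {p : ℝ × ℝ | p.1 ≤ t} = ν (Set.Iic t) := fun t => by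
      rw [hνdef, Measure.map_apply measurable_fst measurableSet_Iic]
      rfl
    set F : ℝ → ℝ := fun t => ProbabilityTheory.cdf ν t with hFdef
    have hFt : ∀ t, (P {p : ℝ × ℝ | p.1 ≤ t}).toReal = F t := fun t => by
      rw [hv, hFdef]
      exact (ProbabilityTheory.cdf_eq_real ν t).symm
    have hF0' : F 0 = 0 := by
      have h0 : ν (Set.Iic 0) = 0 := by
        rw [← hv]
        refine measure_mono_null ?_ hnull
        intro p hp hpos
        exact absurd hp (not_le.mpr hpos.1)
      rw [hFdef]
      simp [ProbabilityTheory.cdf_eq_real, measureReal_def, h0]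
    refine iInf₂_le_of_le F ⟨?_, ?_, ?_, ?_, ?_⟩ ?_
    · exact (ProbabilityTheory.monotone_cdf ν).monotoneOn _
    · exact fun x _ => (ProbabilityTheory.cdf ν).right_continuous x
    · have := ((ProbabilityTheory.cdf ν).right_continuous 0).mono_left
        (nhdsWithin_mono _ Set.Ioi_subset_Ici_self)
      have h2 : Tendsto F (nhdsWithin 0 (Set.Ioi 0)) (nhds (F 0)) := this
      rwa [hF0'] at h2
    · exact ProbabilityTheory.tendsto_cdf_atTop ν
    · exact fun x _ => ⟨ProbabilityTheory.cdf_nonneg ν x, ProbabilityTheory.cdf_le_one ν x⟩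
    · refine iSup_mono fun x => iSup_mono fun hx => iSup_mono fun y => iSup_mono fun hy => ?_
      have hx' : (0:ℝ) < x := hx
      have hy' : (0:ℝ) < y := hy
      apply ENNReal.ofReal_le_ofReal
      rw [hFt x, hFt y]
      have hc2 : 0 ≤ min (1 + 1/x) (1 + y) :=
        le_min (by positivity) (by positivity)
      have hfre : max 0 (F x + F y - 1) ≤ (P {p : ℝ × ℝ | p.1 ≤ x ∧ p.2 ≤ y}).toReal := by
        refine max_le ENNReal.toReal_nonneg ?_
        have hB : MeasurableSet {p : ℝ × ℝ | p.2 ≤ y} :=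
          measurableSet_le measurable_snd measurable_const
        have hswap2 : P {p : ℝ × ℝ | p.2 ≤ y} = P {p : ℝ × ℝ | p.1 ≤ y} := by
          conv_lhs => rw [← hswap]
          rw [Measure.map_apply measurable_swap hB]
          rfl
        have key : P {p : ℝ × ℝ | p.1 ≤ x} + P {p : ℝ × ℝ | p.2 ≤ y}
            ≤ 1 + P ({p : ℝ × ℝ | p.1 ≤ x} ∩ {p : ℝ × ℝ | p.2 ≤ y}) := by
          rw [← measure_union_add_inter {p : ℝ × ℝ | p.1 ≤ x} hB]
          exact add_le_add_left prob_le_one _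
        have hinter : {p : ℝ × ℝ | p.1 ≤ x} ∩ {p : ℝ × ℝ | p.2 ≤ y}
            = {p : ℝ × ℝ | p.1 ≤ x ∧ p.2 ≤ y} := rfl
        rw [hinter] at key
        have key2 : (P {p : ℝ × ℝ | p.1 ≤ x}).toReal + (P {p : ℝ × ℝ | p.2 ≤ y}).toReal
            ≤ 1 + (P {p : ℝ × ℝ | p.1 ≤ x ∧ p.2 ≤ y}).toReal := by
          have h1 := ENNReal.toReal_mono (by finiteness) key
          rwa [ENNReal.toReal_add (measure_ne_top _ _) (measure_ne_top _ _),
            ENNReal.toReal_add (by norm_num) (measure_ne_top _ _),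
            ENNReal.toReal_one] at h1
        rw [hswap2, hFt x, hFt y] at key2
        linarith
      have := mul_le_mul_of_nonneg_left hfre hc2
      linarith
end

section
/- Let P be a distribution on R_{++}^n with R_n(P) = sup_{T ∈ R_{++}^{2×n}} R_n(P,T), and let 𝒯 be the set of time matrices T such that P[z_j = T_{1j}/T_{2j}] = 0 for all j. Then R_n(P) = sup_{T ∈ 𝒯} R_n(P,T). -/
open MeasureTheory ENNReal
open scoped Classical

/-- Makespan of the threshold algorithm with thresholds `z` on time matrix `T`:
task `j` goes to machine 1 (index 0) iff `T 0 j / T 1 j < z j`. -/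
noncomputable def makespan (n : ℕ) (z : Fin n → ℝ) (T : Fin 2 → Fin n → ℝ) : ℝ :=
  max (∑ j : Fin n, if T 0 j / T 1 j < z j then T 0 j else 0)
      (∑ j : Fin n, if T 0 j / T 1 j < z j then 0 else T 1 j)

/-- Optimal makespan over all allocations of tasks to the two machines. -/
noncomputable def optMakespan (n : ℕ) (T : Fin 2 → Fin n → ℝ) : ℝ :=
  ⨅ X : Fin n → Fin 2, ⨆ i : Fin 2, ∑ j : Fin n, if X j = i then T i j else 0

/-- Expected makespan of the randomized threshold algorithm `A^P`. -/
noncomputable def expMakespan (n : ℕ) (P : Measure (Fin n → ℝ)) (T : Fin 2 → Fin n → ℝ) : ℝ≥0∞ :=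
  ∫⁻ z, ENNReal.ofReal (makespan n z T) ∂P

/-- Expected approximation ratio `R_n(P,T)`. -/
noncomputable def ratio (n : ℕ) (P : Measure (Fin n → ℝ)) (T : Fin 2 → Fin n → ℝ) : ℝ≥0∞ :=
  expMakespan n P T / ENNReal.ofReal (optMakespan n T)

/-- Worst-case expected approximation ratio `R_n(P)`. -/
noncomputable def Rworst (n : ℕ) (P : Measure (Fin n → ℝ)) : ℝ≥0∞ :=
  ⨆ T ∈ {T : Fin 2 → Fin n → ℝ | ∀ i j, 0 < T i j}, ratio n P T

section auxx
variable {n : ℕ}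

lemma sup_fin2 (f : Fin 2 → ℝ) : (⨆ i : Fin 2, f i) = max (f 0) (f 1) := by
  apply le_antisymm
  · exact ciSup_le fun i => by fin_cases i <;> simp [le_max_left, le_max_right]
  · refine max_le (le_ciSup (Set.Finite.bddAbove (Set.finite_range f)) 0)
      (le_ciSup (Set.Finite.bddAbove (Set.finite_range f)) 1)

lemma measurable_makespan (T : Fin 2 → Fin n → ℝ) :
    Measurable fun z : Fin n → ℝ => makespan n z T := by
  apply Measurable.max <;> apply Finset.measurable_sum <;> intro j _ <;>
    exact Measurable.ite (measurableSet_lt measurable_const (measurable_pi_apply j))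
      measurable_const measurable_const

lemma makespan_nonneg {z : Fin n → ℝ} {T : Fin 2 → Fin n → ℝ} (hT : ∀ i j, 0 ≤ T i j) :
    0 ≤ makespan n z T :=
  le_trans (Finset.sum_nonneg fun j _ => by split_ifs <;> simp [hT]) (le_max_left _ _)

lemma makespan_le {z : Fin n → ℝ} {T : Fin 2 → Fin n → ℝ} (hT : ∀ i j, 0 ≤ T i j) :
    makespan n z T ≤ (∑ j, T 0 j) + ∑ j, T 1 j := by
  have h0 : (0:ℝ) ≤ ∑ j, T 0 j := Finset.sum_nonneg fun j _ => hT 0 j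
  have h1 : (0:ℝ) ≤ ∑ j, T 1 j := Finset.sum_nonneg fun j _ => hT 1 j
  refine max_le ?_ ?_
  · refine le_trans (Finset.sum_le_sum fun j _ => ?_) (le_add_of_nonneg_right h1)
    split_ifs <;> simp [hT]
  · refine le_trans (Finset.sum_le_sum (fun j _ => ?_)) (le_add_of_nonneg_left h0)
    split_ifs <;> simp [hT]

lemma load_nonneg {T : Fin 2 → Fin n → ℝ} (hT : ∀ i j, 0 ≤ T i j) (X : Fin n → Fin 2) :
    0 ≤ ⨆ i : Fin 2, ∑ j : Fin n, if X j = i then T i j else 0 := by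
  rw [sup_fin2]
  exact le_trans (Finset.sum_nonneg fun j _ => by split_ifs <;> simp [hT]) (le_max_left _ _)

lemma opt_le_load {T : Fin 2 → Fin n → ℝ} (hT : ∀ i j, 0 ≤ T i j) (X : Fin n → Fin 2) :
    optMakespan n T ≤ ⨆ i : Fin 2, ∑ j : Fin n, if X j = i then T i j else 0 :=
  ciInf_le ⟨0, by rintro x ⟨X, rfl⟩; exact load_nonneg hT X⟩ X

lemma opt_le_of {T T' : Fin 2 → Fin n → ℝ} (hT : ∀ i j, 0 ≤ T i j) (hT' : ∀ i j, 0 ≤ T' i j)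
    (c : ℝ)
    (h : ∀ X : Fin n → Fin 2, (⨆ i : Fin 2, ∑ j : Fin n, if X j = i then T i j else 0)
      ≤ (⨆ i : Fin 2, ∑ j : Fin n, if X j = i then T' i j else 0) + c) :
    optMakespan n T ≤ optMakespan n T' + c := by
  obtain ⟨X0, hX0⟩ := Finite.exists_min
    (fun X : Fin n → Fin 2 => ⨆ i : Fin 2, ∑ j : Fin n, if X j = i then T' i j else 0)
  have hopt : optMakespan n T' = ⨆ i : Fin 2, ∑ j : Fin n, if X0 j = i then T' i j else 0 :=
    le_antisymm (opt_le_load hT' X0) (le_ciInf hX0)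
  calc optMakespan n T ≤ _ := opt_le_load hT X0
    _ ≤ _ + c := h X0
    _ = optMakespan n T' + c := by rw [hopt]

lemma opt_pos (hn : 0 < n) {T : Fin 2 → Fin n → ℝ} (hT : ∀ i j, 0 < T i j) :
    0 < optMakespan n T := by
  have hm : 0 < min (T 0 ⟨0, hn⟩) (T 1 ⟨0, hn⟩) := lt_min (hT 0 _) (hT 1 _)
  refine lt_of_lt_of_le hm (le_ciInf fun X => ?_)
  rw [sup_fin2]
  have key : ∀ i : Fin 2, X ⟨0, hn⟩ = i →
      min (T 0 ⟨0, hn⟩) (T 1 ⟨0, hn⟩) ≤ ∑ j : Fin n, if X j = i then T i j else 0 := by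
    intro i hi
    have : T i ⟨0, hn⟩ ≤ ∑ j : Fin n, if X j = i then T i j else 0 := by
      have := Finset.single_le_sum (f := fun j : Fin n => if X j = i then T i j else 0)
        (fun j _ => by split_ifs <;> simp [(hT i j).le]) (Finset.mem_univ ⟨0, hn⟩)
      simpa [hi] using this
    refine le_trans ?_ this
    fin_cases i <;> simp [min_le_left, min_le_right]
  obtain h | h : X ⟨0, hn⟩ = 0 ∨ X ⟨0, hn⟩ = 1 := by omega
  · exact le_trans (key 0 h) (le_max_left _ _)
  · exact le_trans (key 1 h) (le_max_right _ _)

noncomputable def pert (T : Fin 2 → Fin n → ℝ) (ε : ℝ) : Fin 2 → Fin n → ℝ :=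
  fun i j => if i = 0 then T 0 j + ε * T 1 j else T 1 j

lemma pert_zero (T : Fin 2 → Fin n → ℝ) (ε : ℝ) (j : Fin n) :
    pert T ε 0 j = T 0 j + ε * T 1 j := by simp [pert]

lemma pert_one (T : Fin 2 → Fin n → ℝ) (ε : ℝ) (j : Fin n) :
    pert T ε 1 j = T 1 j := by simp [pert]

lemma pert_ratio {T : Fin 2 → Fin n → ℝ} (hT : ∀ i j, 0 < T i j) (ε : ℝ) (j : Fin n) :
    pert T ε 0 j / pert T ε 1 j = T 0 j / T 1 j + ε := by
  rw [pert_zero, pert_one, add_div, mul_div_assoc, div_self (hT 1 j).ne', mul_one]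

lemma pert_pos {T : Fin 2 → Fin n → ℝ} (hT : ∀ i j, 0 < T i j) {ε : ℝ} (hε : 0 < ε) :
    ∀ i j, 0 < pert T ε i j := by
  intro i j
  unfold pert
  split_ifs
  · exact add_pos (hT 0 j) (mul_pos hε (hT 1 j))
  · exact hT 1 j

lemma makespan_pert {T : Fin 2 → Fin n → ℝ} (hT : ∀ i j, 0 < T i j) {ε : ℝ} (hε : 0 < ε)
    {z : Fin n → ℝ} (hz : ∀ j, ¬(T 0 j / T 1 j < z j ∧ z j ≤ T 0 j / T 1 j + ε)) :
    makespan n z T ≤ makespan n z (pert T ε) ∧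
    makespan n z (pert T ε) ≤ makespan n z T + ε * ∑ j, T 1 j := by
  have hc : ∀ j, (pert T ε 0 j / pert T ε 1 j < z j) = (T 0 j / T 1 j < z j) := by
    intro j
    rw [pert_ratio hT]
    rcases lt_or_ge (T 0 j / T 1 j) (z j) with h | h
    · have : T 0 j / T 1 j + ε < z j := lt_of_not_ge fun hle => hz j ⟨h, hle⟩
      simp [h, this]
    · have : ¬ (T 0 j / T 1 j + ε < z j) := by
        intro h'; exact absurd (lt_of_le_of_lt (by linarith) h') (not_lt.2 h)
      simp [this, not_lt.2 h]
  set a := ∑ j : Fin n, if T 0 j / T 1 j < z j then T 0 j else 0 with ha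
  set b := ∑ j : Fin n, if T 0 j / T 1 j < z j then 0 else T 1 j with hb
  set δ := ∑ j : Fin n, if T 0 j / T 1 j < z j then ε * T 1 j else 0 with hδ
  have hmul : ∀ j, (0:ℝ) ≤ ε * T 1 j := fun j => mul_nonneg hε.le (hT 1 j).le
  have hδ0 : 0 ≤ δ := Finset.sum_nonneg fun j _ => by
    split_ifs with h
    · exact hmul j
    · exact le_rfl
  have hδle : δ ≤ ε * ∑ j, T 1 j := by
    rw [Finset.mul_sum]
    refine Finset.sum_le_sum fun j _ => ?_
    split_ifs with h
    · exact le_rfl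
    · exact hmul j
  have hmp : makespan n z (pert T ε) = max (a + δ) b := by
    unfold makespan
    congr 1
    · rw [ha, hδ, ← Finset.sum_add_distrib]
      refine Finset.sum_congr rfl fun j _ => ?_
      simp only [hc j]
      simp only [pert_zero]
      split_ifs <;> ring
    · refine Finset.sum_congr rfl fun j _ => ?_
      simp only [hc j]
      simp only [pert_one]
  constructor
  · rw [hmp]
    exact max_le_max (le_add_of_nonneg_right hδ0) le_rfl
  · rw [hmp]
    show max (a + δ) b ≤ max a b + ε * ∑ j, T 1 j
    have hε' : 0 ≤ ε * ∑ j, T 1 j := by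
      have h1 : (0:ℝ) ≤ ∑ j, T 1 j := Finset.sum_nonneg fun j _ => (hT 1 j).le
      positivity
    exact max_le (add_le_add (le_max_left _ _) hδle)
      (le_add_of_nonneg_right hε' |>.trans (add_le_add (le_max_right _ _) le_rfl))

lemma exists_Ioo_not_mem {A : Set ℝ} (hA : A.Countable) {u v : ℝ} (huv : u < v) :
    ∃ x, x ∈ Set.Ioo u v ∧ x ∉ A := by
  have hns : ¬ (Set.Ioo u v ⊆ A) := by
    intro hsub
    have hct : (Set.Ioo u v).Countable := hA.mono hsub
    rw [← Cardinal.le_aleph0_iff_set_countable, Cardinal.mk_Ioo_real huv] at hct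
    exact hct.not_gt Cardinal.aleph0_lt_continuum
  rcases Set.not_subset.1 hns with ⟨x, hx, hxA⟩
  exact ⟨x, hx, hxA⟩

end auxx

/-- the worst-case expected approximation ratio `R_n(P)` is
attained as a supremum over only the time matrices on which `P` puts no mass on
ties. -/
theorem stmt19 {n : ℕ} (P : Measure (Fin n → ℝ)) [IsProbabilityMeasure P]
    (hsupp : P {z : Fin n → ℝ | ¬ ∀ j, 0 < z j} = 0) :
    Rworst n P = ⨆ T ∈ {T : Fin 2 → Fin n → ℝ |
        (∀ i j, 0 < T i j) ∧ ∀ j, P {z : Fin n → ℝ | z j = T 0 j / T 1 j} = 0},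
      ratio n P T := by
  rw [Rworst]
  refine le_antisymm (iSup₂_le fun T hT => ?_) (biSup_mono fun T hT => hT.1)
  replace hT : ∀ i j, 0 < T i j := hT
  rcases Nat.eq_zero_or_pos n with hn | hn
  · subst hn
    exact le_iSup₂_of_le T ⟨hT, fun j => j.elim0⟩ le_rfl
  -- notation
  set r : Fin n → ℝ := fun j => T 0 j / T 1 j with hr
  -- countable set of bad ε
  set A : Set ℝ := ⋃ j : Fin n, (fun e : ℝ => r j + e) ⁻¹'
      {t : ℝ | 0 < P {z : Fin n → ℝ | z j = t}} with hA
  have hAc : A.Countable := by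
    refine Set.countable_iUnion fun j => Set.Countable.preimage ?_ (add_right_injective (r j))
    exact Measure.countable_meas_level_set_pos (measurable_pi_apply j)
  -- choice of ε k
  have hch : ∀ k : ℕ, ∃ e : ℝ, e ∈ Set.Ioo 0 (1/((k:ℝ)+1)) ∧ e ∉ A := fun k =>
    exists_Ioo_not_mem hAc (by positivity)
  choose ε hεmem hεA using hch
  have hεpos : ∀ k, 0 < ε k := fun k => (hεmem k).1
  have hεlt : ∀ k, ε k < 1/((k:ℝ)+1) := fun k => (hεmem k).2
  have hεle1 : ∀ k, ε k ≤ 1 := by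
    intro k
    have h1 : (1:ℝ)/((k:ℝ)+1) ≤ 1 := by
      rw [div_le_one (by positivity)]
      have := Nat.cast_nonneg (α := ℝ) k
      linarith
    linarith [hεlt k]
  have hεtend : Filter.Tendsto ε Filter.atTop (nhds 0) :=
    squeeze_zero (fun k => (hεpos k).le) (fun k => (hεlt k).le)
      tendsto_one_div_add_atTop_nhds_zero_nat
  -- the perturbed matrices
  set Tk : ℕ → Fin 2 → Fin n → ℝ := fun k => pert T (ε k) with hTk
  have hTkpos : ∀ k, ∀ i j, 0 < Tk k i j := fun k => pert_pos hT (hεpos k)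
  have hTkratio : ∀ k j, Tk k 0 j / Tk k 1 j = r j + ε k := fun k j => pert_ratio hT (ε k) j
  have hTkmem : ∀ k, Tk k ∈ {T : Fin 2 → Fin n → ℝ |
      (∀ i j, 0 < T i j) ∧ ∀ j, P {z : Fin n → ℝ | z j = T 0 j / T 1 j} = 0} := by
    intro k
    refine ⟨hTkpos k, fun j => ?_⟩
    rw [hTkratio k j]
    have hna := hεA k
    rw [hA] at hna
    simp only [Set.mem_iUnion, Set.mem_preimage, Set.mem_setOf_eq, not_exists] at hna
    exact le_antisymm (not_lt.1 (hna j)) zero_le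
  -- the bad sets
  set B : ℕ → Set (Fin n → ℝ) := fun k =>
    ⋃ j : Fin n, (fun z : Fin n → ℝ => z j) ⁻¹' Set.Ioc (r j) (r j + ε k) with hB
  have hBmeas : ∀ k, MeasurableSet (B k) :=
    fun k => MeasurableSet.iUnion fun j => (measurable_pi_apply j) measurableSet_Ioc
  have hptend : Filter.Tendsto (fun k => P (B k)) Filter.atTop (nhds 0) := by
    have hq : ∀ j : Fin n, Filter.Tendsto
        (fun k : ℕ => P ((fun z : Fin n → ℝ => z j) ⁻¹' Set.Ioc (r j) (r j + 1/((k:ℝ)+1))))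
        Filter.atTop (nhds 0) := by
      intro j
      have hmono : Antitone (fun k : ℕ =>
          (fun z : Fin n → ℝ => z j) ⁻¹' Set.Ioc (r j) (r j + 1/((k:ℝ)+1))) := by
        intro k m hkm
        apply Set.preimage_mono
        apply Set.Ioc_subset_Ioc le_rfl
        have h2 : (1:ℝ)/((m:ℝ)+1) ≤ 1/((k:ℝ)+1) := by
          apply one_div_le_one_div_of_le (by positivity)
          have : (k:ℝ) ≤ (m:ℝ) := by exact_mod_cast hkm
          linarith
        linarith
      have hint : ⋂ k : ℕ,
          (fun z : Fin n → ℝ => z j) ⁻¹' Set.Ioc (r j) (r j + 1/((k:ℝ)+1)) = ∅ := by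
        ext z
        simp only [Set.mem_iInter, Set.mem_preimage, Set.mem_Ioc, Set.mem_empty_iff_false,
          iff_false, not_forall]
        by_contra hcon
        push_neg at hcon
        obtain ⟨k, hk⟩ := exists_nat_one_div_lt (sub_pos.2 (hcon 0).1)
        have := (hcon k).2
        have h2 : (1:ℝ)/((k:ℝ)+1) < z j - r j := hk
        linarith
      have := tendsto_measure_iInter_atTop (μ := P)
        (fun k => (((measurable_pi_apply j) measurableSet_Ioc).nullMeasurableSet))
        hmono ⟨0, measure_ne_top P _⟩
      rw [hint] at this
      simpa [Function.comp_def] using this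
    have hle : ∀ k, P (B k) ≤
        ∑ j : Fin n, P ((fun z : Fin n → ℝ => z j) ⁻¹' Set.Ioc (r j) (r j + 1/((k:ℝ)+1))) := by
      intro k
      refine le_trans (measure_iUnion_fintype_le _ _) (Finset.sum_le_sum fun j _ =>
        measure_mono (Set.preimage_mono (Set.Ioc_subset_Ioc le_rfl (by linarith [hεlt k]))))
    have hsum : Filter.Tendsto (fun k : ℕ => ∑ j : Fin n,
        P ((fun z : Fin n → ℝ => z j) ⁻¹' Set.Ioc (r j) (r j + 1/((k:ℝ)+1))))
        Filter.atTop (nhds 0) := by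
      have := tendsto_finset_sum (Finset.univ : Finset (Fin n)) (fun j _ => hq j)
      simpa using this
    exact tendsto_of_tendsto_of_tendsto_of_le_of_le tendsto_const_nhds hsum
      (fun k => zero_le) hle
  -- uniform bound on makespans
  set S1 : ℝ := ∑ j, T 1 j with hS1
  have hS1nn : 0 ≤ S1 := Finset.sum_nonneg fun j _ => (hT 1 j).le
  set Creal : ℝ := (∑ j, T 0 j) + S1 + S1 with hCreal
  set C : ℝ≥0∞ := ENNReal.ofReal Creal with hC
  have hCne : C ≠ ⊤ := ofReal_ne_top
  have hmkT_le : ∀ z : Fin n → ℝ, makespan n z T ≤ Creal := by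
    intro z
    refine le_trans (makespan_le (fun i j => (hT i j).le)) ?_
    rw [hCreal]
    linarith
  have hmkTk_le : ∀ k (z : Fin n → ℝ), makespan n z (Tk k) ≤ Creal := by
    intro k z
    refine le_trans (makespan_le (fun i j => (hTkpos k i j).le)) ?_
    have h0 : ∑ j, Tk k 0 j = (∑ j, T 0 j) + ε k * S1 := by
      rw [hS1, Finset.mul_sum, ← Finset.sum_add_distrib]
      exact Finset.sum_congr rfl fun j _ => pert_zero T (ε k) j
    have h1 : ∑ j, Tk k 1 j = S1 := Finset.sum_congr rfl fun j _ => pert_one T (ε k) j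
    rw [h0, h1, hCreal]
    have : ε k * S1 ≤ S1 := mul_le_of_le_one_left hS1nn (hεle1 k)
    linarith
  -- expected makespans
  set E : ℝ≥0∞ := expMakespan n P T with hE
  set Ek : ℕ → ℝ≥0∞ := fun k => expMakespan n P (Tk k) with hEk
  have hEleC : E ≤ C := by
    have h := lintegral_mono (μ := P) (fun z =>
      (ENNReal.ofReal_le_ofReal (hmkT_le z) : ENNReal.ofReal (makespan n z T) ≤ C))
    simp only [lintegral_const, measure_univ, mul_one] at h; exact h
  have hEkleC : ∀ k, Ek k ≤ C := by
    intro k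
    have h := lintegral_mono (μ := P) (fun z =>
      (ENNReal.ofReal_le_ofReal (hmkTk_le k z) : ENNReal.ofReal (makespan n z (Tk k)) ≤ C))
    simp only [lintegral_const, measure_univ, mul_one] at h; exact h
  have hEne : E ≠ ⊤ := ne_top_of_le_ne_top hCne hEleC
  have hEkne : ∀ k, Ek k ≠ ⊤ := fun k => ne_top_of_le_ne_top hCne (hEkleC k)
  have hzout : ∀ k, ∀ z : Fin n → ℝ, z ∉ B k →
      ∀ j, ¬(T 0 j / T 1 j < z j ∧ z j ≤ T 0 j / T 1 j + ε k) := by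
    intro k z hzB j hcon
    exact hzB (Set.mem_iUnion.2 ⟨j, hcon⟩)
  have hE1 : ∀ k, E ≤ Ek k + C * P (B k) := by
    intro k
    have hpt : ∀ z : Fin n → ℝ, ENNReal.ofReal (makespan n z T) ≤
        ENNReal.ofReal (makespan n z (Tk k)) + (B k).indicator (fun _ => C) z := by
      intro z
      by_cases hzB : z ∈ B k
      · rw [Set.indicator_of_mem hzB]
        exact le_add_left (ENNReal.ofReal_le_ofReal (hmkT_le z))
      · rw [Set.indicator_of_notMem hzB, add_zero]
        exact ENNReal.ofReal_le_ofReal (makespan_pert hT (hεpos k) (hzout k z hzB)).1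
    calc E ≤ ∫⁻ z, (ENNReal.ofReal (makespan n z (Tk k))
          + (B k).indicator (fun _ => C) z) ∂P := lintegral_mono hpt
      _ = Ek k + C * P (B k) := by
        rw [lintegral_add_right _ (measurable_const.indicator (hBmeas k))]
        congr 1
        rw [lintegral_indicator_const (hBmeas k)]
  have hE2 : ∀ k, Ek k ≤ E + ENNReal.ofReal (ε k * S1) + C * P (B k) := by
    intro k
    have hpt : ∀ z : Fin n → ℝ, ENNReal.ofReal (makespan n z (Tk k)) ≤
        ENNReal.ofReal (makespan n z T) + ENNReal.ofReal (ε k * S1)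
          + (B k).indicator (fun _ => C) z := by
      intro z
      by_cases hzB : z ∈ B k
      · rw [Set.indicator_of_mem hzB]
        exact le_add_left (ENNReal.ofReal_le_ofReal (hmkTk_le k z))
      · rw [Set.indicator_of_notMem hzB, add_zero]
        refine le_trans (ENNReal.ofReal_le_ofReal
          (makespan_pert hT (hεpos k) (hzout k z hzB)).2) ?_
        exact ENNReal.ofReal_add_le
    calc Ek k ≤ ∫⁻ z, (ENNReal.ofReal (makespan n z T) + ENNReal.ofReal (ε k * S1)
          + (B k).indicator (fun _ => C) z) ∂P := lintegral_mono hpt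
      _ = E + ENNReal.ofReal (ε k * S1) + C * P (B k) := by
        rw [lintegral_add_right _ (measurable_const.indicator (hBmeas k)),
          lintegral_add_right _ measurable_const]
        congr 1
        · congr 1
          simp [lintegral_const, measure_univ]
        · rw [lintegral_indicator_const (hBmeas k)]
  -- convergence of expected makespans
  have hCp : Filter.Tendsto (fun k => C * P (B k)) Filter.atTop (nhds 0) := by
    have h : Filter.Tendsto (fun k => C * P (B k)) Filter.atTop (nhds (C * 0)) :=
      ENNReal.Tendsto.const_mul hptend (Or.inr hCne)
    simpa using h
  have hlow : Filter.Tendsto (fun k => E - C * P (B k)) Filter.atTop (nhds E) := by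
    have h := ENNReal.Tendsto.sub (tendsto_const_nhds : Filter.Tendsto (fun _ : ℕ => E)
      Filter.atTop (nhds E)) hCp (Or.inl hEne)
    simpa using h
  have hof : Filter.Tendsto (fun k => ENNReal.ofReal (ε k * S1)) Filter.atTop (nhds 0) := by
    have h1 : Filter.Tendsto (fun k => ε k * S1) Filter.atTop (nhds 0) := by
      simpa using hεtend.mul_const S1
    have := (ENNReal.continuous_ofReal.tendsto 0).comp h1
    simpa [Function.comp_def] using this
  have hup : Filter.Tendsto (fun k => E + ENNReal.ofReal (ε k * S1) + C * P (B k))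
      Filter.atTop (nhds E) := by
    have h := (((tendsto_const_nhds : Filter.Tendsto (fun _ : ℕ => E)
      Filter.atTop (nhds E)).add hof).add hCp)
    simpa using h
  have hEktend : Filter.Tendsto Ek Filter.atTop (nhds E) :=
    tendsto_of_tendsto_of_tendsto_of_le_of_le hlow hup
      (fun k => tsub_le_iff_right.2 (hE1 k)) hE2
  -- optimal makespans
  set d : ℝ := optMakespan n T with hd
  have hdpos : 0 < d := opt_pos hn hT
  set dk : ℕ → ℝ := fun k => optMakespan n (Tk k) with hdk
  have hdkpos : ∀ k, 0 < dk k := fun k => opt_pos hn (hTkpos k)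
  have hdk1 : ∀ k, d ≤ dk k := by
    intro k
    have h := opt_le_of (fun i j => (hT i j).le) (fun i j => (hTkpos k i j).le) 0 ?_
    · simpa using h
    · intro X
      rw [add_zero, sup_fin2, sup_fin2]
      refine max_le_max (Finset.sum_le_sum fun j _ => ?_) (Finset.sum_le_sum fun j _ => ?_)
      · split_ifs
        · simp only [hTk]; rw [pert_zero]
          exact le_add_of_nonneg_right (mul_nonneg (hεpos k).le (hT 1 j).le)
        · exact le_rfl
      · split_ifs
        · simp only [hTk]; rw [pert_one]
        · exact le_rfl
  have hdk2 : ∀ k, dk k ≤ d + ε k * S1 := by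
    intro k
    refine opt_le_of (fun i j => (hTkpos k i j).le) (fun i j => (hT i j).le) (ε k * S1) ?_
    intro X
    rw [sup_fin2, sup_fin2]
    have hεS : 0 ≤ ε k * S1 := mul_nonneg (hεpos k).le hS1nn
    refine max_le ?_ ?_
    · refine le_trans (Finset.sum_le_sum (g := fun j : Fin n =>
        (if X j = 0 then T 0 j else 0) + ε k * T 1 j) fun j _ => ?_) ?_
      · split_ifs
        · simp only [hTk]; rw [pert_zero]
        · simpa using mul_nonneg (hεpos k).le (hT 1 j).le
      · rw [Finset.sum_add_distrib, ← Finset.mul_sum, ← hS1]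
        exact add_le_add (le_max_left _ _) le_rfl
    · refine le_trans (le_of_eq (Finset.sum_congr
        (g := fun j : Fin n => if X j = 1 then T 1 j else 0) rfl fun j _ => ?_)) ?_
      · show (if X j = 1 then Tk k 1 j else 0) = (if X j = 1 then T 1 j else 0)
        simp only [hTk]; rw [pert_one]
      · exact le_add_of_nonneg_right hεS |>.trans (add_le_add (le_max_right _ _) le_rfl)
  have hdtend : Filter.Tendsto dk Filter.atTop (nhds d) := by
    refine tendsto_of_tendsto_of_tendsto_of_le_of_le
      (tendsto_const_nhds : Filter.Tendsto (fun _ : ℕ => d) Filter.atTop (nhds d))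
      ?_ hdk1 hdk2
    have h := (tendsto_const_nhds : Filter.Tendsto (fun _ : ℕ => d) Filter.atTop
      (nhds d)).add (hεtend.mul_const S1)
    simpa using h
  -- pass to real ratios
  have hektend : Filter.Tendsto (fun k => (Ek k).toReal) Filter.atTop (nhds E.toReal) :=
    (ENNReal.tendsto_toReal hEne).comp hEktend
  have hdiv : Filter.Tendsto (fun k => (Ek k).toReal / dk k) Filter.atTop
      (nhds (E.toReal / d)) := hektend.div hdtend hdpos.ne'
  have hratio : ∀ k, ratio n P (Tk k) = ENNReal.ofReal ((Ek k).toReal / dk k) := by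
    intro k
    rw [ratio, ENNReal.ofReal_div_of_pos (hdkpos k), ENNReal.ofReal_toReal (hEkne k)]
  have hratioT : ratio n P T = ENNReal.ofReal (E.toReal / d) := by
    rw [ratio, ENNReal.ofReal_div_of_pos hdpos, ENNReal.ofReal_toReal hEne]
  have htendratio : Filter.Tendsto (fun k => ratio n P (Tk k)) Filter.atTop
      (nhds (ratio n P T)) := by
    rw [hratioT]
    refine Filter.Tendsto.congr (fun k => (hratio k).symm) ?_
    exact (ENNReal.continuous_ofReal.tendsto _).comp hdiv
  refine le_of_tendsto htendratio (Filter.Eventually.of_forall fun k => ?_)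
  exact le_iSup₂_of_le (Tk k) (hTkmem k) le_rfl
end
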